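/- Let f, g, h : ℝ → ℝ be differentiable functions satisfying f' = g·h, g' = -f·h, h' = -f·g on ℝ. Assume R := √(f(0)² + g(0)²) = √(f(0)² + h(0)²) > 0 and g(0) ≠ 0. Then |h(0)| = |g(0)| > 0, and with t₀ := artanh(f(0)/R), for all t ∈ ℝ: f(t) = R·tanh(sign(g(0)h(0))·R·t + t₀), g(t) = sign(g(0))·R·sech(sign(g(0)h(0))·R·t + t₀), and h(t) = sign(h(0))·R·sech(sign(g(0)h(0))·R·t + t₀). Moreover f(t)² + g(t)² = R² and f(t)² + h(t)² = R² for all t ∈ ℝ. -/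

import Mathlib

/-- The real inverse hyperbolic tangent. -/
noncomputable def artanh (x : ℝ) : ℝ := Real.log ((1 + x) / (1 - x)) / 2

/-- Linear homogeneous ODE with zero initial value has zero solution. -/
lemma lin_ode_zero (c q : ℝ → ℝ) (hc : Continuous c)
    (hq : ∀ t, HasDerivAt q (c t * q t) t) (h0 : q 0 = 0) : ∀ t, q t = 0 := by
  set C : ℝ → ℝ := fun t => ∫ x in (0:ℝ)..t, c x with hC
  have hCd : ∀ t, HasDerivAt C (c t) t := fun t =>
    (hc.integral_hasStrictDerivAt 0 t).hasDerivAt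
  set ψ : ℝ → ℝ := fun t => q t ^ 2 * Real.exp (-2 * C t) with hψ
  have hψd : ∀ t, HasDerivAt ψ 0 t := by
    intro t
    have h1 : HasDerivAt (fun t => q t ^ 2) (2 * q t ^ 1 * (c t * q t)) t := (hq t).pow 2
    have h2 : HasDerivAt (fun t => Real.exp (-2 * C t)) (Real.exp (-2 * C t) * (-2 * c t)) t := by
      have := (((hCd t).const_mul (-2))).exp
      simpa [mul_comm] using this
    have h3 := h1.mul h2
    refine h3.congr_deriv (Eq.symm ?_)
    ring
  have hconst : ∀ t, ψ t = ψ 0 := fun t =>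
    is_const_of_deriv_eq_zero (fun x => (hψd x).differentiableAt)
      (fun x => (hψd x).deriv) t 0
  intro t
  have h4 : ψ t = 0 := by
    rw [hconst t]; simp [hψ, h0]
  have h5 : q t ^ 2 = 0 := by
    have := Real.exp_pos (-2 * C t)
    simp only [hψ, mul_eq_zero] at h4
    rcases h4 with h | h
    · exact h
    · exact absurd h this.ne'
  exact pow_eq_zero_iff (n := 2) (by norm_num) |>.mp h5

/-- derivative of tanh -/
lemma hasDerivAt_tanh (x : ℝ) : HasDerivAt Real.tanh (1 / Real.cosh x ^ 2) x := by
  have h := (Real.hasDerivAt_sinh x).div (Real.hasDerivAt_cosh x) (Real.cosh_pos x).ne'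
  have he : (Real.cosh x * Real.cosh x - Real.sinh x * Real.sinh x) / Real.cosh x ^ 2
      = 1 / Real.cosh x ^ 2 := by
    rw [show Real.cosh x * Real.cosh x - Real.sinh x * Real.sinh x
        = Real.cosh x ^ 2 - Real.sinh x ^ 2 by ring, Real.cosh_sq_sub_sinh_sq]
  have ht : Real.tanh = fun x => Real.sinh x / Real.cosh x := by
    funext y; exact Real.tanh_eq_sinh_div_cosh y
  rw [ht]
  rw [he] at h
  exact h

lemma tanh_artanh {x : ℝ} (h1 : -1 < x) (h2 : x < 1) : Real.tanh (artanh x) = x := by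
  have hd : (0:ℝ) < 1 - x := by linarith
  have hn : (0:ℝ) < 1 + x := by linarith
  have ha : 0 < (1 + x) / (1 - x) := div_pos hn hd
  set y := artanh x with hy
  have hEpos : 0 < Real.exp y := Real.exp_pos y
  have hE : Real.exp y ^ 2 = (1 + x) / (1 - x) := by
    have hyy : y + y = Real.log ((1 + x) / (1 - x)) := by rw [hy, artanh]; ring
    rw [sq, ← Real.exp_add, hyy, Real.exp_log ha]
  rw [eq_div_iff hd.ne'] at hE
  rw [Real.tanh_eq_sinh_div_cosh, Real.sinh_eq, Real.cosh_eq, Real.exp_neg]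
  have hden : 0 < Real.exp y + (Real.exp y)⁻¹ := by positivity
  field_simp
  nlinarith [hE, hEpos]

/-- The degenerate (hyperbolic) case of the Jacobi-elliptic ODE system
`f' = gh`, `g' = -fh`, `h' = -fg`. -/
theorem stmt_16 (f g h : ℝ → ℝ)
    (hf : ∀ t, HasDerivAt f (g t * h t) t)
    (hg : ∀ t, HasDerivAt g (-(f t * h t)) t)
    (hh : ∀ t, HasDerivAt h (-(f t * g t)) t)
    (R : ℝ) (hR : R = Real.sqrt (f 0 ^ 2 + g 0 ^ 2))
    (hR' : R = Real.sqrt (f 0 ^ 2 + h 0 ^ 2))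
    (hRpos : 0 < R) (hg0 : g 0 ≠ 0)
    (t₀ : ℝ) (ht₀ : t₀ = artanh (f 0 / R)) :
    |h 0| = |g 0| ∧ 0 < |g 0| ∧
    (∀ t : ℝ,
      f t = R * Real.tanh (Real.sign (g 0 * h 0) * R * t + t₀) ∧
      g t = Real.sign (g 0) * R / Real.cosh (Real.sign (g 0 * h 0) * R * t + t₀) ∧
      h t = Real.sign (h 0) * R / Real.cosh (Real.sign (g 0 * h 0) * R * t + t₀)) ∧
    (∀ t : ℝ, f t ^ 2 + g t ^ 2 = R ^ 2 ∧ f t ^ 2 + h t ^ 2 = R ^ 2) := by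
  have hfc : Continuous f := Differentiable.continuous (fun t => (hf t).differentiableAt)
  have hgc : Continuous g := Differentiable.continuous (fun t => (hg t).differentiableAt)
  have hhc : Continuous h := Differentiable.continuous (fun t => (hh t).differentiableAt)
  have hR2 : f 0 ^ 2 + g 0 ^ 2 = R ^ 2 := by
    rw [hR, Real.sq_sqrt (by positivity)]
  have hR2' : f 0 ^ 2 + h 0 ^ 2 = R ^ 2 := by
    rw [hR', Real.sq_sqrt (by positivity)]
  have consg : ∀ t, f t ^ 2 + g t ^ 2 = R ^ 2 := by
    have hd : ∀ t, HasDerivAt (fun t => f t ^ 2 + g t ^ 2) 0 t := by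
      intro t
      have h1 : HasDerivAt (fun t => f t ^ 2) (2 * f t ^ 1 * (g t * h t)) t := (hf t).pow 2
      have h2 : HasDerivAt (fun t => g t ^ 2) (2 * g t ^ 1 * (-(f t * h t))) t := (hg t).pow 2
      have := h1.add h2
      refine this.congr_deriv (Eq.symm ?_)
      ring
    intro t
    have := is_const_of_deriv_eq_zero (f := fun t => f t ^ 2 + g t ^ 2)
      (fun x => (hd x).differentiableAt) (fun x => (hd x).deriv) t 0
    rw [this, hR2]
  have consh : ∀ t, f t ^ 2 + h t ^ 2 = R ^ 2 := by
    have hd : ∀ t, HasDerivAt (fun t => f t ^ 2 + h t ^ 2) 0 t := by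
      intro t
      have h1 : HasDerivAt (fun t => f t ^ 2) (2 * f t ^ 1 * (g t * h t)) t := (hf t).pow 2
      have h2 : HasDerivAt (fun t => h t ^ 2) (2 * h t ^ 1 * (-(f t * g t))) t := (hh t).pow 2
      have := h1.add h2
      refine this.congr_deriv (Eq.symm ?_)
      ring
    intro t
    have := is_const_of_deriv_eq_zero (f := fun t => f t ^ 2 + h t ^ 2)
      (fun x => (hd x).differentiableAt) (fun x => (hd x).deriv) t 0
    rw [this, hR2']
  have hsqgh : h 0 ^ 2 = g 0 ^ 2 := by linarith [hR2, hR2']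
  have habs : |h 0| = |g 0| := by
    rw [← Real.sqrt_sq_eq_abs, ← Real.sqrt_sq_eq_abs, hsqgh]
  have hg0pos : 0 < |g 0| := abs_pos.mpr hg0
  have hh0 : h 0 ≠ 0 := abs_pos.mp (habs ▸ hg0pos)
  set σ := Real.sign (g 0 * h 0) with hσdef
  have hgh0 : g 0 * h 0 ≠ 0 := mul_ne_zero hg0 hh0
  have hσ : σ = -1 ∨ σ = 1 := Real.sign_apply_eq_of_ne_zero _ hgh0
  have hσ1 : σ * σ = 1 := by rcases hσ with h1 | h1 <;> rw [h1] <;> norm_num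
  have hσg : σ * g 0 = h 0 := by
    have h1 : σ * (g 0 * h 0) = |g 0 * h 0| := by
      rcases lt_or_gt_of_ne hgh0 with hlt | hgt
      · rw [hσdef, Real.sign_of_neg hlt, abs_of_neg hlt]; ring
      · rw [hσdef, Real.sign_of_pos hgt, abs_of_pos hgt]; ring
    have h2 : |g 0 * h 0| = h 0 * h 0 := by
      rw [abs_mul, ← habs]
      exact abs_mul_abs_self _
    refine mul_right_cancel₀ hh0 ?_
    rw [mul_assoc, h1, h2]
  have hq : ∀ t, h t = σ * g t := by
    have key := lin_ode_zero (fun t => σ * f t) (fun t => h t - σ * g t)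
      (continuous_const.mul hfc)
      (fun t => by
        have := (hh t).sub ((hg t).const_mul σ)
        refine this.congr_deriv (Eq.symm ?_)
        linear_combination (-(f t * g t)) * hσ1)
      (by simp [← hσg])
    intro t
    have h9 := key t
    linarith
  have hfode : ∀ t, HasDerivAt f (σ * (R ^ 2 - f t ^ 2)) t := by
    intro t
    have h2 : g t * h t = σ * (R ^ 2 - f t ^ 2) := by
      rw [hq t]
      linear_combination σ * consg t
    have := hf t
    rwa [h2] at this
  set u : ℝ → ℝ := fun t => σ * R * t + t₀ with hu
  set φ : ℝ → ℝ := fun t => R * Real.tanh (u t) with hφ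
  have hud : ∀ t, HasDerivAt u (σ * R) t := by
    intro t
    exact (((hasDerivAt_id t).const_mul (σ * R)).add_const t₀).congr_deriv (mul_one _)
  have hφd : ∀ t, HasDerivAt φ (σ * (R ^ 2 - φ t ^ 2)) t := by
    intro t
    have h1 := ((hasDerivAt_tanh (u t)).comp t (hud t)).const_mul R
    have hc := Real.cosh_sq_sub_sinh_sq (u t)
    have hcp := (Real.cosh_pos (u t)).ne'
    refine h1.congr_deriv (Eq.symm ?_)
    rw [hφ]
    simp only
    rw [Real.tanh_eq_sinh_div_cosh]
    field_simp
    linear_combination σ * hc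
  have hf0lt : |f 0| < R := by
    have h1 : 0 < g 0 ^ 2 := by positivity
    have h2 : f 0 ^ 2 < R ^ 2 := by nlinarith
    calc |f 0| = Real.sqrt (f 0 ^ 2) := (Real.sqrt_sq_eq_abs _).symm
      _ < R := by
          rw [show R = Real.sqrt (R ^ 2) from (Real.sqrt_sq hRpos.le).symm]
          exact Real.sqrt_lt_sqrt (by positivity) h2
  have habslt := abs_lt.mp hf0lt
  have hx1 : -1 < f 0 / R := by
    rw [lt_div_iff₀ hRpos]; linarith [habslt.1]
  have hx2 : f 0 / R < 1 := by
    rw [div_lt_iff₀ hRpos]; linarith [habslt.2]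
  have hφ0 : φ 0 = f 0 := by
    rw [hφ]
    simp only
    have hu0 : u 0 = t₀ := by rw [hu]; simp
    rw [hu0, ht₀, tanh_artanh hx1 hx2]
    field_simp
  have hfeq : ∀ t, f t = φ t := by
    have hφc : Continuous φ := Differentiable.continuous (fun t => (hφd t).differentiableAt)
    have key := lin_ode_zero (fun t => -σ * (f t + φ t)) (fun t => f t - φ t)
      (continuous_const.mul (hfc.add hφc))
      (fun t => by
        have := (hfode t).sub (hφd t)
        refine this.congr_deriv (Eq.symm ?_)
        ring)
      (by simp [hφ0])
    intro t
    have h9 := key t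
    linarith
  have hcoshpos : ∀ t, 0 < Real.cosh (u t) := fun t => Real.cosh_pos _
  have hgsq : ∀ t, g t ^ 2 = (R / Real.cosh (u t)) ^ 2 := by
    intro t
    have h1 := consg t
    have h2 : f t * Real.cosh (u t) = R * Real.sinh (u t) := by
      have h3 := hfeq t
      rw [hφ] at h3
      simp only at h3
      rw [Real.tanh_eq_sinh_div_cosh] at h3
      rw [h3]
      field_simp
    have hc := Real.cosh_sq_sub_sinh_sq (u t)
    have hcp := (hcoshpos t).ne'
    rw [div_pow]
    rw [eq_div_iff (by positivity)]
    linear_combination (Real.cosh (u t)) ^ 2 * h1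
      - (f t * Real.cosh (u t) + R * Real.sinh (u t)) * h2 + R ^ 2 * hc
  have hgne : ∀ t, g t ≠ 0 := by
    intro t ht0
    have h1 := hgsq t
    rw [ht0] at h1
    have h2 : 0 < R / Real.cosh (u t) := div_pos hRpos (hcoshpos t)
    nlinarith
  set s := Real.sign (g 0) with hs
  have hs2 : s * s = 1 := by
    rcases Real.sign_apply_eq_of_ne_zero (g 0) hg0 with h1 | h1 <;> rw [hs, h1] <;> norm_num
  have hspos : ∀ t, 0 < s * g t := by
    intro t
    by_contra hle
    push_neg at hle
    have h00 : 0 < s * g 0 := Real.sign_mul_pos_of_ne_zero _ hg0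
    have hGc : Continuous (fun t => s * g t) := continuous_const.mul hgc
    have hmem : (0:ℝ) ∈ Set.uIcc (s * g t) (s * g 0) := Set.mem_uIcc.mpr (Or.inl ⟨hle, h00.le⟩)
    obtain ⟨x, _, hx⟩ := intermediate_value_uIcc (a := t) (b := 0) hGc.continuousOn hmem
    have hsne : s ≠ 0 := fun hz => hg0 (Real.sign_eq_zero_iff.mp (hs ▸ hz))
    have : g x = 0 := by
      rcases mul_eq_zero.mp hx with h1 | h1
      · exact absurd h1 hsne
      · exact h1
    exact hgne x this
  have hgval : ∀ t, g t = s * R / Real.cosh (u t) := by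
    intro t
    have hp1 := hspos t
    have hp2 := div_pos hRpos (hcoshpos t)
    have hsq : (s * g t) ^ 2 = (R / Real.cosh (u t)) ^ 2 := by
      have hss : s ^ 2 = 1 := by rw [sq]; exact hs2
      rw [mul_pow, hss, one_mul]
      exact hgsq t
    have h1 : s * g t = R / Real.cosh (u t) := by
      calc s * g t = Real.sqrt ((s * g t) ^ 2) := (Real.sqrt_sq hp1.le).symm
        _ = Real.sqrt ((R / Real.cosh (u t)) ^ 2) := by rw [hsq]
        _ = R / Real.cosh (u t) := Real.sqrt_sq hp2.le
    have h2 := congrArg (fun y => s * y) h1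
    rw [← mul_assoc, hs2, one_mul] at h2
    rw [h2]
    ring
  have hsign_h : Real.sign (h 0) = σ * s := by
    have hh0eq : h 0 = σ * g 0 := hσg.symm
    rcases hσ with h1 | h1
    · rw [hh0eq, h1, neg_one_mul, Real.sign_neg, hs]
      ring
    · rw [hh0eq, h1, one_mul, hs]
      ring
  have hhval : ∀ t, h t = Real.sign (h 0) * R / Real.cosh (u t) := by
    intro t
    rw [hq t, hgval t, hsign_h]
    ring
  refine ⟨habs, hg0pos, fun t => ⟨?_, ?_, ?_⟩, fun t => ⟨consg t, consh t⟩⟩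
  · simpa [hφ, hu] using hfeq t
  · simpa [hu] using hgval t
  · simpa [hu] using hhval t
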